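/- (Proposition 2, steady-state form.) Let θ ∈ ℤ, and define the age-violation probability at threshold θ as ζ(θ) = Σ'_{w ∈ ℕ, w + 2M + 1 > θ} π w, the steady-state probability that the AoI at a frame end, namely Ω + 2M + 1 with Ω distributed as π, exceeds θ. Then ζ(θ) = (1-ξ)^{⌊(θ-2M)/M⌋} · (1 - ξ·(1-(1-μ)^{(θ-2M) mod M})/σ) if θ > 2M, and ζ(θ) = 1 if θ ≤ 2M. -/

import Mathlib

/-- Closed form of the partial sums of `π`. -/
lemma sum_range_pi_aux (M : ℕ) (hM : 1 ≤ M) (μ ξ σ : ℝ)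
    (hσ : σ = 1 - (1 - μ) ^ M) (hσ0 : σ ≠ 0) (t : ℕ) :
    ∑ w ∈ Finset.range t, ξ * (1 - ξ) ^ (w / M) * μ * (1 - μ) ^ (w % M) / σ
      = 1 - (1 - ξ) ^ (t / M) * (1 - ξ * (1 - (1 - μ) ^ (t % M)) / σ) := by
  induction t with
  | zero =>
    have h0 : 0 % M = 0 := Nat.zero_mod M
    simp [h0]
  | succ t ih =>
    rw [Finset.sum_range_succ, ih]
    have hmod : t % M < M := Nat.mod_lt t (by omega)
    rcases Nat.lt_or_ge (t % M + 1) M with h | h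
    · -- no block boundary
      have e1 : (t + 1) % M = t % M + 1 := by
        conv_lhs => rw [← Nat.div_add_mod t M]
        rw [Nat.add_assoc, Nat.mul_add_mod, Nat.mod_eq_of_lt h]
      have e2 : (t + 1) / M = t / M := by
        conv_lhs => rw [← Nat.div_add_mod t M]
        rw [Nat.add_assoc, Nat.mul_add_div (by omega), Nat.div_eq_of_lt h, Nat.add_zero]
      rw [e1, e2, pow_succ]
      field_simp
      ring
    · -- block boundary: t % M = M - 1
      have hr : t % M + 1 = M := by omega
      have e1 : (t + 1) % M = 0 := by
        conv_lhs => rw [← Nat.div_add_mod t M, Nat.add_assoc, hr]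
        simp [Nat.mul_add_mod]
      have e2 : (t + 1) / M = t / M + 1 := by
        conv_lhs => rw [← Nat.div_add_mod t M, Nat.add_assoc, hr]
        rw [Nat.mul_add_div (by omega), Nat.div_self (by omega)]
      have hpow : (1 - μ) ^ M = (1 - μ) ^ (t % M) * (1 - μ) := by
        rw [← pow_succ, hr]
      rw [e1, e2, pow_succ, pow_zero, hσ, hpow]
      have hσ' : 1 - (1 - μ) ^ (t % M) * (1 - μ) ≠ 0 := by
        rw [hσ, hpow] at hσ0; exact hσ0
      field_simp
      have hσ'' : 1 - (1 - μ) * (1 - μ) ^ (t % M) ≠ 0 := by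
        rw [mul_comm]; exact hσ'
      field_simp
      ring

/-- Proposition 2, steady-state form: closed form of the age-violation
probability `ζ(θ) = ∑'_{w : w + 2M + 1 > θ} π w`. -/
theorem stmt_8 (M : ℕ) (hM : 1 ≤ M) (μ ξ : ℝ)
    (hμ : μ ∈ Set.Ioo (0 : ℝ) 1) (hξ : ξ ∈ Set.Ioo (0 : ℝ) 1)
    (σ : ℝ) (hσ : σ = 1 - (1 - μ) ^ M)
    (π : ℕ → ℝ)
    (hπ : ∀ w, π w = ξ * (1 - ξ) ^ (w / M) * μ * (1 - μ) ^ (w % M) / σ)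
    (θ : ℤ) :
    (2 * (M : ℤ) < θ →
      ∑' w : {w : ℕ // θ < (w : ℤ) + 2 * M + 1}, π w =
        (1 - ξ) ^ ((θ - 2 * M).toNat / M) *
          (1 - ξ * (1 - (1 - μ) ^ ((θ - 2 * M).toNat % M)) / σ)) ∧
    (θ ≤ 2 * (M : ℤ) →
      ∑' w : {w : ℕ // θ < (w : ℤ) + 2 * M + 1}, π w = 1) := by
  obtain ⟨hμ0, hμ1⟩ := hμ
  obtain ⟨hξ0, hξ1⟩ := hξ
  have hr2a : (0 : ℝ) < 1 - μ := by linarith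
  have hr2b : 1 - μ < 1 := by linarith
  have hσpos : 0 < σ := by
    rw [hσ]
    have : (1 - μ) ^ M < 1 := pow_lt_one₀ (le_of_lt hr2a) hr2b (by omega)
    linarith
  have hσ0 : σ ≠ 0 := ne_of_gt hσpos
  -- nonnegativity of π
  have hπ0 : ∀ w, 0 ≤ π w := by
    intro w
    rw [hπ w]
    have h1 : (0:ℝ) ≤ (1 - ξ) ^ (w / M) := pow_nonneg (by linarith) _
    have h2 : (0:ℝ) ≤ (1 - μ) ^ (w % M) := pow_nonneg (le_of_lt hr2a) _
    positivity
  -- the bounded factor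
  have hfac : ∀ t : ℕ, 0 ≤ 1 - ξ * (1 - (1 - μ) ^ (t % M)) / σ ∧
      1 - ξ * (1 - (1 - μ) ^ (t % M)) / σ ≤ 1 := by
    intro t
    have hle : (1 - μ) ^ M ≤ (1 - μ) ^ (t % M) :=
      pow_le_pow_of_le_one (le_of_lt hr2a) (le_of_lt hr2b) (le_of_lt (Nat.mod_lt t (by omega)))
    have h1 : (1 - μ) ^ (t % M) ≤ 1 := pow_le_one₀ (le_of_lt hr2a) (by linarith)
    constructor
    · have hnum : ξ * (1 - (1 - μ) ^ (t % M)) ≤ σ := by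
        have : 1 - (1 - μ) ^ (t % M) ≤ σ := by rw [hσ]; linarith
        nlinarith
      have := div_le_one hσpos |>.mpr hnum
      linarith
    · have : 0 ≤ ξ * (1 - (1 - μ) ^ (t % M)) / σ := by
        apply div_nonneg _ (le_of_lt hσpos)
        nlinarith
      linarith
  -- partial sums
  have hps : ∀ t : ℕ, ∑ w ∈ Finset.range t, π w
      = 1 - (1 - ξ) ^ (t / M) * (1 - ξ * (1 - (1 - μ) ^ (t % M)) / σ) := by
    intro t
    have := sum_range_pi_aux M hM μ ξ σ hσ hσ0 t
    simpa [hπ] using this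
  -- the remainder term tends to zero
  have hdiv : Filter.Tendsto (fun t : ℕ => t / M) Filter.atTop Filter.atTop := by
    rw [Filter.tendsto_atTop_atTop]
    intro b
    exact ⟨b * M, fun t ht => (Nat.le_div_iff_mul_le (by omega)).mpr ht⟩
  have hgeo : Filter.Tendsto (fun t : ℕ => (1 - ξ) ^ (t / M)) Filter.atTop (nhds 0) :=
    (tendsto_pow_atTop_nhds_zero_of_lt_one (by linarith) (by linarith)).comp hdiv
  have htail0 : Filter.Tendsto
      (fun t : ℕ => (1 - ξ) ^ (t / M) * (1 - ξ * (1 - (1 - μ) ^ (t % M)) / σ))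
      Filter.atTop (nhds 0) := by
    apply squeeze_zero (g := fun t : ℕ => (1 - ξ) ^ (t / M))
    · intro t
      exact mul_nonneg (pow_nonneg (by linarith) _) (hfac t).1
    · intro t
      have h1 : (0:ℝ) ≤ (1 - ξ) ^ (t / M) := pow_nonneg (by linarith) _
      calc (1 - ξ) ^ (t / M) * (1 - ξ * (1 - (1 - μ) ^ (t % M)) / σ)
          ≤ (1 - ξ) ^ (t / M) * 1 := by
            exact mul_le_mul_of_nonneg_left (hfac t).2 h1
        _ = (1 - ξ) ^ (t / M) := mul_one _
    · exact hgeo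
  have hsum : HasSum π 1 := by
    rw [hasSum_iff_tendsto_nat_of_nonneg hπ0]
    have : Filter.Tendsto (fun t : ℕ =>
        1 - (1 - ξ) ^ (t / M) * (1 - ξ * (1 - (1 - μ) ^ (t % M)) / σ))
        Filter.atTop (nhds (1 - 0)) := Filter.Tendsto.const_sub _ htail0
    rw [sub_zero] at this
    exact this.congr (fun t => (hps t).symm)
  constructor
  · intro hθ
    set t : ℕ := (θ - 2 * M).toNat with htdef
    have ht : (t : ℤ) = θ - 2 * M := Int.toNat_of_nonneg (by omega)
    -- reindex the subtype sum
    have hcond : ∀ w : ℕ, (θ < (w : ℤ) + 2 * M + 1) ↔ t ≤ w := by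
      intro w
      omega
    let e : ℕ ≃ {w : ℕ // θ < (w : ℤ) + 2 * M + 1} :=
      { toFun := fun n => ⟨n + t, by rw [hcond]; omega⟩
        invFun := fun w => w.1 - t
        left_inv := fun n => by simp
        right_inv := fun w => by
          have := (hcond w.1).mp w.2
          exact Subtype.ext (Nat.sub_add_cancel this) }
    have h1 : ∑' w : {w : ℕ // θ < (w : ℤ) + 2 * M + 1}, π w
        = ∑' n : ℕ, π (n + t) := (e.tsum_eq (fun w => π w.1)).symm
    have h2 : ∑ i ∈ Finset.range t, π i + ∑' i : ℕ, π (i + t) = ∑' i : ℕ, π i :=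
      Summable.sum_add_tsum_nat_add t hsum.summable
    rw [hsum.tsum_eq, hps t] at h2
    rw [h1]
    linarith
  · intro hθ
    have hall : ∀ w : ℕ, θ < (w : ℤ) + 2 * M + 1 := by intro w; omega
    have h1 : ∑' w : {w : ℕ // θ < (w : ℤ) + 2 * M + 1}, π w = ∑' n : ℕ, π n :=
      (Equiv.subtypeUnivEquiv hall).tsum_eq (fun w => π w)
    rw [h1, hsum.tsum_eq]
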